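/- Let Υ be a compatibility scenario, B' ∈ NC(Υ) a noncontextual behavior, and α ∈ [0, 1]. Then there exists a single noncontextual wiring W ∈ NCW(Υ → Υ) such that W(B) = α·B + (1−α)·B' (contextwise convex combination) for every nondisturbing behavior B on Υ. -/

import Mathlib

noncomputable section

/-- A compatibility scenario: a finite set of measurements `M`, finite nonempty
outcome sets `O x` for each measurement, and an antichain `C` of maximal contexts. -/
structure Scenario where
  M : Type
  [fintypeM : Fintype M]
  [decEqM : DecidableEq M]
  O : M → Type
  [fintypeO : ∀ x, Fintype (O x)]
  [decEqO : ∀ x, DecidableEq (O x)]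
  [nonemptyO : ∀ x, Nonempty (O x)]
  C : Finset (Finset M)
  antichain : ∀ γ ∈ C, ∀ γ' ∈ C, γ ⊆ γ' → γ = γ'

attribute [instance] Scenario.fintypeM Scenario.decEqM Scenario.fintypeO
  Scenario.decEqO Scenario.nonemptyO

/-- The elements of a set of measurements, as a type. -/
def Scenario.El (S : Scenario) (γ : Finset S.M) : Type := {x : S.M // x ∈ γ}

instance (S : Scenario) (γ : Finset S.M) : Fintype (S.El γ) :=
  show Fintype {x : S.M // x ∈ γ} from inferInstance

instance (S : Scenario) (γ : Finset S.M) : DecidableEq (S.El γ) :=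
  show DecidableEq {x : S.M // x ∈ γ} from inferInstance

/-- Joint outcomes `O^γ` of a set of measurements `γ`. -/
def Scenario.JO (S : Scenario) (γ : Finset S.M) : Type := (x : S.El γ) → S.O x.1

instance (S : Scenario) (γ : Finset S.M) : Fintype (S.JO γ) :=
  show Fintype ((x : S.El γ) → S.O x.1) from inferInstance

instance (S : Scenario) (γ : Finset S.M) : DecidableEq (S.JO γ) :=
  show DecidableEq ((x : S.El γ) → S.O x.1) from inferInstance

instance (S : Scenario) (γ : Finset S.M) : Nonempty (S.JO γ) :=
  ⟨fun _ => Classical.arbitrary _⟩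

/-- Global outcome assignments `O^M`. -/
abbrev Scenario.Glob (S : Scenario) : Type := (x : S.M) → S.O x

/-- Restriction of a global assignment to a set of measurements. -/
def Scenario.restr (S : Scenario) (γ : Finset S.M) (o : S.Glob) : S.JO γ :=
  fun x => o x.1

/-- The (maximal) contexts of a scenario. -/
def Scenario.Ctx (S : Scenario) : Type := {γ : Finset S.M // γ ∈ S.C}

instance (S : Scenario) : Fintype S.Ctx :=
  show Fintype {γ : Finset S.M // γ ∈ S.C} from inferInstance

instance (S : Scenario) : DecidableEq S.Ctx :=
  show DecidableEq {γ : Finset S.M // γ ∈ S.C} from inferInstance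

/-- A behavior (box): a family of real-valued functions, one for each maximal context. -/
def Behavior (S : Scenario) : Type := (γ : S.Ctx) → S.JO γ.1 → ℝ

/-- The family forms a probability distribution on each maximal context. -/
def IsProb (S : Scenario) (B : Behavior S) : Prop :=
  ∀ γ : S.Ctx, (∀ t, 0 ≤ B γ t) ∧ (∑ t, B γ t = 1)

/-- Kochen–Specker noncontextuality: existence of a global section, i.e. a probability
distribution on `O^M` whose marginal on each maximal context equals the behavior. -/
def IsNC (S : Scenario) (B : Behavior S) : Prop :=
  ∃ pM : S.Glob → ℝ, (∀ o, 0 ≤ pM o) ∧ (∑ o, pM o = 1) ∧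
    ∀ (γ : S.Ctx) (t : S.JO γ.1),
      B γ t = ∑ o : S.Glob, if S.restr γ.1 o = t then pM o else 0

/-- Restriction between nested sets of measurements. -/
def Scenario.restr2 (S : Scenario) {γ δ : Finset S.M} (h : δ ⊆ γ) (t : S.JO γ) :
    S.JO δ := fun x => t ⟨x.1, h x.2⟩

/-- The no-disturbance condition: marginals agree on intersections of contexts. -/
def IsND (S : Scenario) (B : Behavior S) : Prop :=
  ∀ γ γ' : S.Ctx, ∀ u : S.JO (γ.1 ∩ γ'.1),
    (∑ t : S.JO γ.1, if S.restr2 Finset.inter_subset_left t = u then B γ t else 0) =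
      (∑ t : S.JO γ'.1, if S.restr2 Finset.inter_subset_right t = u then B γ' t else 0)

/-- Factorizability: a noncontextual (hidden-variable) factorizable model. -/
def IsFactorizable (S : Scenario) (B : Behavior S) : Prop :=
  ∃ (k : ℕ) (q : Fin k → ℝ) (e : (x : S.M) → Fin k → S.O x → ℝ),
    (∀ l, 0 ≤ q l) ∧ (∑ l, q l = 1) ∧
    (∀ x l, (∀ o, 0 ≤ e x l o) ∧ (∑ o, e x l o = 1)) ∧
    ∀ (γ : S.Ctx) (t : S.JO γ.1),
      B γ t = ∑ l, q l * ∏ x : S.El γ.1, e x.1 l (t x)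

/-- The deterministic behavior induced by a global outcome assignment. -/
def detB (S : Scenario) (o : S.Glob) : Behavior S :=
  fun γ t => if S.restr γ.1 o = t then 1 else 0
/-- A noncontextual wiring with input scenario `S`, whose output scenario has the
measurements, maximal contexts and outcome sets of `T`.  It consists of a
noncontextual pre-processing behavior (given by its global section `pPre` on the
pre-processing outcome sets `OPre`), a function `f` selecting, from each
pre-processing context `β` and joint outcome `r`, a context of the input scenario,
a coordinatewise wiring `wmap` feeding every output measurement slot from a single
input measurement, and adaptively chosen noncontextual (factorizable)
post-processing boxes given by a hidden variable `φ` with distribution `q β r`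
and response functions `resp`. -/
structure Wiring (S T : Scenario) where
  OPre : T.M → Type
  [fintypeOPre : ∀ m, Fintype (OPre m)]
  [decEqOPre : ∀ m, DecidableEq (OPre m)]
  [nonemptyOPre : ∀ m, Nonempty (OPre m)]
  pPre : ((x : T.M) → OPre x) → ℝ
  pPre_nonneg : ∀ o, 0 ≤ pPre o
  pPre_sum : ∑ o, pPre o = 1
  f : (β : T.Ctx) → ((x : T.El β.1) → OPre x.1) → S.Ctx
  wmap : (β : T.Ctx) → (r : (x : T.El β.1) → OPre x.1) → T.El β.1 → S.El (f β r).1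
  nPhi : (β : T.Ctx) → ((x : T.El β.1) → OPre x.1) → ℕ
  q : (β : T.Ctx) → (r : (x : T.El β.1) → OPre x.1) → Fin (nPhi β r) → ℝ
  q_nonneg : ∀ β r φ, 0 ≤ q β r φ
  q_sum : ∀ β r, ∑ φ, q β r φ = 1
  resp : (β : T.Ctx) → (r : (x : T.El β.1) → OPre x.1) → (m : T.El β.1) →
    Fin (nPhi β r) → S.O (wmap β r m).1 → T.O m.1 → ℝ
  resp_nonneg : ∀ β r m φ o u, 0 ≤ resp β r m φ o u
  resp_sum : ∀ β r m φ o, ∑ u, resp β r m φ o u = 1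

attribute [instance] Wiring.fintypeOPre Wiring.decEqOPre Wiring.nonemptyOPre

/-- Marginal of the pre-processing behavior on a pre-processing context. -/
def Wiring.preB {S T : Scenario} (W : Wiring S T) (β : T.Ctx)
    (r : (x : T.El β.1) → W.OPre x.1) : ℝ :=
  ∑ o : (x : T.M) → W.OPre x,
    if (fun x : T.El β.1 => o x.1) = r then W.pPre o else 0

/-- The wired behavior `W(B)` on the output scenario. -/
def Wiring.apply {S T : Scenario} (W : Wiring S T) (B : Behavior S) : Behavior T :=
  fun β t =>
    ∑ r : (x : T.El β.1) → W.OPre x.1,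
      ∑ s : S.JO (W.f β r).1,
        W.preB β r * B (W.f β r) s *
          ∑ φ : Fin (W.nPhi β r),
            W.q β r φ * ∏ m : T.El β.1, W.resp β r m φ (s (W.wmap β r m)) (t m)

/-- Free convertibility of behaviors on a scenario by noncontextual wirings (whose
output scenario has the same maximal contexts and context-outcome sets). -/
def Arrow (S : Scenario) (B B' : Behavior S) : Prop :=
  ∃ W : Wiring S S, W.apply B = B'

private lemma prod_indicator' {ι : Type} [Fintype ι] [DecidableEq ι] {κ : ι → Type}
    [∀ i, DecidableEq (κ i)] (s t : ∀ i, κ i) :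
    (∏ i, (if t i = s i then (1 : ℝ) else 0)) = if s = t then 1 else 0 := by
  by_cases h : s = t
  · subst h; simp
  · simp only [h, if_false]
    obtain ⟨i, hi⟩ := Function.ne_iff.mp h
    exact Finset.prod_eq_zero (Finset.mem_univ i) (by simp [Ne.symm hi])

/-- for every noncontextual behavior `B'` on `Υ` and every `α ∈ [0,1]`
there is a single noncontextual wiring `W ∈ NCW(Υ → Υ)` with
`W(B) = α·B + (1-α)·B'` for every nondisturbing behavior `B` on `Υ`. -/
theorem statement_9 (S : Scenario) (B' : Behavior S) (hNC : IsNC S B') (α : ℝ)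
    (h0 : 0 ≤ α) (h1 : α ≤ 1) :
    ∃ W : Wiring S S, ∀ B : Behavior S, IsProb S B → IsND S B →
      ∀ (γ : S.Ctx) (t : S.JO γ.1),
        W.apply B γ t = α * B γ t + (1 - α) * B' γ t := by

  obtain ⟨pM, hpM0, hpM1, hpMm⟩ := hNC
  refine ⟨{ OPre := fun x => S.O x
            pPre := pM
            pPre_nonneg := hpM0
            pPre_sum := hpM1
            f := fun β _ => β
            wmap := fun β r m => m
            nPhi := fun _ _ => 2
            q := fun _ _ φ => if φ = 0 then α else 1 - α
            q_nonneg := by intro β r φ; split <;> linarith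
            q_sum := by intro β r; rw [Fin.sum_univ_two]; norm_num
            resp := fun β r m φ o u =>
              if φ = 0 then (if u = o then 1 else 0) else (if u = r m then 1 else 0)
            resp_nonneg := by intro β r m φ o u; split <;> split <;> norm_num
            resp_sum := by intro β r m φ o; split <;> simp }, ?_⟩
  intro B hProb _ γ t
  have hpre : ∀ (r : S.JO γ.1),
      (∑ o : S.Glob, @ite _ ((fun x : S.El γ.1 => o x.1) = r) (Fintype.decidablePiFintype _ _) (pM o) 0) = B' γ r := by
    intro r
    rw [hpMm γ r]
    rfl
  simp only [Wiring.apply, Wiring.preB]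
  have key : ∀ (r s : S.JO γ.1),
      (∑ φ : Fin 2, (if φ = 0 then α else 1 - α) *
        ∏ m : S.El γ.1, (if φ = 0 then (if t m = s m then (1:ℝ) else 0)
          else (if t m = r m then 1 else 0)))
      = α * (if s = t then 1 else 0) + (1 - α) * (if r = t then 1 else 0) := by
    intro r s
    rw [Fin.sum_univ_two]
    simp only [if_pos rfl, Fin.one_eq_zero_iff, OfNat.ofNat_ne_one, if_false, if_true]
    rw [prod_indicator' s t, prod_indicator' r t]; rfl
  calc (∑ r : S.JO γ.1, ∑ s : S.JO γ.1,
        (∑ o : S.Glob, @ite _ ((fun x : S.El γ.1 => o x.1) = r) (Fintype.decidablePiFintype _ _) (pM o) 0) * B γ s *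
          ∑ φ : Fin 2, (if φ = 0 then α else 1 - α) *
            ∏ m : S.El γ.1, (if φ = 0 then (if t m = s m then (1:ℝ) else 0)
              else (if t m = r m then 1 else 0)))
      = ∑ r : S.JO γ.1, ∑ s : S.JO γ.1,
          B' γ r * B γ s *
            (α * (if s = t then 1 else 0) + (1 - α) * (if r = t then 1 else 0)) := by
        refine Finset.sum_congr rfl fun r _ => Finset.sum_congr rfl fun s _ => ?_
        rw [hpre r, key r s]
    _ = α * B γ t + (1 - α) * B' γ t := by
        have hBsum := (hProb γ).2
        have hB'sum : ∑ r : S.JO γ.1, B' γ r = 1 := by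
          calc ∑ r : S.JO γ.1, B' γ r
              = ∑ r : S.JO γ.1, ∑ o : S.Glob,
                  (@ite _ ((fun x : S.El γ.1 => o x.1) = r) (Fintype.decidablePiFintype _ _) (pM o) 0) :=
                Finset.sum_congr rfl fun r _ => (hpre r).symm
            _ = ∑ o : S.Glob, ∑ r : S.JO γ.1,
                  (@ite _ ((fun x : S.El γ.1 => o x.1) = r) (Fintype.decidablePiFintype _ _) (pM o) 0) :=
                Finset.sum_comm
            _ = ∑ o : S.Glob, pM o :=
                Finset.sum_congr rfl fun o _ => by
                  refine (Finset.sum_eq_single (fun x : S.El γ.1 => o x.1) (fun b _ hb => ?_)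
                    (fun h => absurd (Finset.mem_univ _) h)).trans ?_
                  · split
                    · next h => exact absurd h.symm hb
                    · rfl
                  · split
                    · rfl
                    · next h => exact absurd rfl h
            _ = 1 := hpM1
        have hinner : ∀ r : S.JO γ.1,
            (∑ s : S.JO γ.1, B' γ r * B γ s *
              (α * (if s = t then (1:ℝ) else 0) + (1 - α) * (if r = t then 1 else 0)))
            = B' γ r * (α * B γ t + (1 - α) * (if r = t then 1 else 0)) := by
          intro r
          simp only [mul_assoc, ← Finset.mul_sum]
          congr 1
          have h1 : ∀ s : S.JO γ.1,
              B γ s * (α * (if s = t then (1:ℝ) else 0) + (1 - α) * (if r = t then 1 else 0))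
              = (if s = t then α * B γ s else 0)
                + B γ s * ((1 - α) * (if r = t then 1 else 0)) := by
            intro s; split <;> ring
          rw [Finset.sum_congr rfl fun s _ => h1 s, Finset.sum_add_distrib,
            Finset.sum_ite_eq' Finset.univ t (fun s => α * B γ s), ← Finset.sum_mul, hBsum]
          simp
        rw [Finset.sum_congr rfl fun r _ => hinner r]
        have h2 : ∀ r : S.JO γ.1,
            B' γ r * (α * B γ t + (1 - α) * (if r = t then 1 else 0))
            = B' γ r * (α * B γ t) + (if r = t then (1 - α) * B' γ r else 0) := by
          intro r; split <;> ring
        rw [Finset.sum_congr rfl fun r _ => h2 r, Finset.sum_add_distrib,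
          Finset.sum_ite_eq' Finset.univ t (fun r => (1 - α) * B' γ r),
          ← Finset.sum_mul, hB'sum]
        simp [mul_comm]
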